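/- The inequality ℓ·MMS^{1,d}(M) ≤ MMS^{ℓ,d}(M) can be strict: for ℓ = 2 and d ≥ 2, the instance with d−1 goods of value 1 and one good of value ε with 0 < ε < 1 satisfies MMS^{2,d}(M) = 1 + ε while 2·MMS^{1,d}(M) = 2ε. -/

import Mathlib

open Finset

variable {α : Type*} [DecidableEq α]

/-- A partition of `M` into `d` (possibly empty) bundles. -/
def IsPartition (M : Finset α) (d : ℕ) (P : Fin d → Finset α) : Prop :=
  (∀ i j, i ≠ j → Disjoint (P i) (P j)) ∧ Finset.univ.biUnion P = M

/-- The ℓ-out-of-d maximin share: the maximum over d-partitions of M of the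
minimum over unions of ℓ parts of the total value. -/
noncomputable def MMS (v : α → ℝ) (M : Finset α) (l d : ℕ) : ℝ :=
  sSup { x | ∃ P : Fin d → Finset α, IsPartition M d P ∧
    x = sInf { y | ∃ S : Finset (Fin d), S.card = l ∧ y = ∑ i ∈ S, ∑ g ∈ P i, v g } }

section AuxLemmas

lemma part_subset' {M : Finset α} {d : ℕ} {P : Fin d → Finset α}
    (hP : IsPartition M d P) (i : Fin d) : P i ⊆ M := by
  rw [← hP.2]; exact subset_biUnion_of_mem P (mem_univ i)

lemma part_sum' {M : Finset α} {d : ℕ} {P : Fin d → Finset α}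
    (hP : IsPartition M d P) (v : α → ℝ) :
    ∑ i, ∑ g ∈ P i, v g = ∑ g ∈ M, v g := by
  rw [← hP.2, Finset.sum_biUnion]
  intro i _ j _ hij
  exact hP.1 i j hij

lemma part_card' {M : Finset α} {d : ℕ} {P : Fin d → Finset α}
    (hP : IsPartition M d P) : ∑ i, (P i).card = M.card := by
  rw [← hP.2, Finset.card_biUnion]
  intro i _ j _ hij
  exact hP.1 i j hij

lemma sum_v_no' (v : α → ℝ) (M : Finset α) (g0 : α) (ε : ℝ)
    (hv : ∀ g ∈ M, v g = if g = g0 then ε else 1)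
    (T : Finset α) (hT : T ⊆ M) (hno : g0 ∉ T) :
    ∑ g ∈ T, v g = T.card := by
  rw [Finset.sum_congr rfl (fun g hg => by
    rw [hv g (hT hg), if_neg (by rintro rfl; exact hno hg)])]
  simp

lemma sum_v_yes' (v : α → ℝ) (M : Finset α) (g0 : α) (ε : ℝ)
    (hv : ∀ g ∈ M, v g = if g = g0 then ε else 1)
    (T : Finset α) (hT : T ⊆ M) (hyes : g0 ∈ T) :
    ∑ g ∈ T, v g = ((T.card : ℝ) - 1) + ε := by
  rw [← Finset.add_sum_erase _ _ hyes, hv g0 (hT hyes), if_pos rfl,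
    sum_v_no' v M g0 ε hv _ ((erase_subset _ _).trans hT) (notMem_erase _ _),
    card_erase_of_mem hyes]
  have : 1 ≤ T.card := card_pos.mpr ⟨g0, hyes⟩
  push_cast [this]
  ring

section Claims
variable {d : ℕ} {ε : ℝ} {M : Finset α} {g0 : α} {v : α → ℝ} {P : Fin d → Finset α}
variable (hd : 2 ≤ d) (hε0 : 0 < ε) (hε1 : ε < 1) (hg0 : g0 ∈ M) (hcard : M.card = d)
  (hv : ∀ g ∈ M, v g = if g = g0 then ε else 1) (hP : IsPartition M d P)

set_option linter.unusedSectionVars false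

include hg0 hcard hv hP in
lemma w_total' : ∑ i, ∑ g ∈ P i, v g = (d:ℝ) - 1 + ε := by
  rw [part_sum' hP v, sum_v_yes' v M g0 ε hv M subset_rfl hg0, hcard]

include hd hg0 hcard hP in
lemma all_cards_one' (h : ∀ i, (P i).Nonempty) (i : Fin d) : (P i).card = 1 := by
  have hle : ∀ j, 1 ≤ (P j).card := fun j => card_pos.mpr (h j)
  have htot : ∑ j, (P j).card = d := by rw [part_card' hP, hcard]
  have hsplit : (P i).card + ∑ j ∈ univ.erase i, (P j).card = ∑ j, (P j).card := by
    simpa using Finset.add_sum_erase univ (fun j => (P j).card) (mem_univ i)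
  have hrest : (univ.erase i).card ≤ ∑ j ∈ univ.erase i, (P j).card := by
    rw [Finset.card_eq_sum_ones]
    exact Finset.sum_le_sum fun j _ => hle j
  have hcardu : (univ.erase i).card = d - 1 := by
    rw [card_erase_of_mem (mem_univ i), card_univ, Fintype.card_fin]
  have h1 := hle i
  rw [hcardu] at hrest
  omega

include hd hε0 hg0 hcard hv hP in
lemma claim1' : ∃ i : Fin d, ∑ g ∈ P i, v g ≤ ε := by
  by_cases h : ∀ i, (P i).Nonempty
  · obtain ⟨i0, -, hi0⟩ := mem_biUnion.mp (hP.2.symm ▸ hg0)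
    have hsing : P i0 = {g0} := by
      obtain ⟨x, hx⟩ := card_eq_one.mp (all_cards_one' hd hg0 hcard hP h i0)
      rw [hx] at hi0 ⊢
      rw [mem_singleton.mp hi0]
    refine ⟨i0, ?_⟩
    rw [hsing, sum_singleton, hv g0 hg0, if_pos rfl]
  · push_neg at h
    obtain ⟨i1, hi1⟩ := h
    exact ⟨i1, by rw [hi1, sum_empty]; exact hε0.le⟩

include hd hε0 hε1 hg0 hcard hv hP in
lemma claim2' : ∃ i j : Fin d, i ≠ j ∧
    (∑ g ∈ P i, v g) + (∑ g ∈ P j, v g) ≤ 1 + ε := by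
  by_cases h : ∀ i, (P i).Nonempty
  · obtain ⟨i0, -, hi0⟩ := mem_biUnion.mp (hP.2.symm ▸ hg0)
    have hsing : P i0 = {g0} := by
      obtain ⟨x, hx⟩ := card_eq_one.mp (all_cards_one' hd hg0 hcard hP h i0)
      rw [hx] at hi0 ⊢
      rw [mem_singleton.mp hi0]
    have : Nontrivial (Fin d) := Fin.nontrivial_iff_two_le.mpr hd
    obtain ⟨j0, hj0⟩ := exists_ne i0
    obtain ⟨x, hx⟩ := card_eq_one.mp (all_cards_one' hd hg0 hcard hP h j0)
    have hxM : x ∈ M := part_subset' hP j0 (hx ▸ mem_singleton_self x)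
    have hxg0 : x ≠ g0 := by
      rintro rfl
      exact (Finset.disjoint_left.mp (hP.1 j0 i0 hj0))
        (hx ▸ mem_singleton_self x) (hsing ▸ mem_singleton_self x)
    refine ⟨i0, j0, hj0.symm, ?_⟩
    rw [hsing, hx, sum_singleton, sum_singleton, hv g0 hg0, if_pos rfl,
      hv x hxM, if_neg hxg0]
    linarith
  · push_neg at h
    obtain ⟨i1, hi1⟩ := h
    by_contra hc
    push_neg at hc
    have hlt : ∀ j ∈ univ.erase i1, 1 + ε < ∑ g ∈ P j, v g := by
      intro j hj
      have := hc i1 j (Finset.ne_of_mem_erase hj).symm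
      rw [hi1, sum_empty, zero_add] at this
      linarith
    have hne : (univ.erase i1).Nonempty := by
      rw [← card_pos, card_erase_of_mem (mem_univ i1), card_univ, Fintype.card_fin]
      omega
    have hsum : ∑ j ∈ univ.erase i1, (1 + ε) < ∑ j ∈ univ.erase i1, ∑ g ∈ P j, v g :=
      Finset.sum_lt_sum_of_nonempty hne hlt
    have heq : ∑ j ∈ univ.erase i1, ∑ g ∈ P j, v g = (d:ℝ) - 1 + ε := by
      have h2 := Finset.add_sum_erase univ (fun j => ∑ g ∈ P j, v g) (mem_univ i1)
      simp only [hi1, sum_empty, zero_add] at h2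
      rw [h2, w_total' hg0 hcard hv hP]
    rw [Finset.sum_const, card_erase_of_mem (mem_univ i1), card_univ,
      Fintype.card_fin, nsmul_eq_mul] at hsum
    have hd2 : (2:ℝ) ≤ d := by exact_mod_cast hd
    have hcast : ((d-1 : ℕ) : ℝ) = (d:ℝ) - 1 := by
      have : 1 ≤ d := by omega
      push_cast [this]; ring
    rw [hcast, heq] at hsum
    nlinarith

end Claims

lemma wset_finite' {d : ℕ} (w : Fin d → ℝ) (l : ℕ) :
    {y : ℝ | ∃ S : Finset (Fin d), S.card = l ∧ y = ∑ i ∈ S, w i}.Finite := by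
  have : {y : ℝ | ∃ S : Finset (Fin d), S.card = l ∧ y = ∑ i ∈ S, w i}
      = (fun S : Finset (Fin d) => ∑ i ∈ S, w i) '' {S | S.card = l} := by
    ext y; simp [eq_comm]
  rw [this]
  exact Set.Finite.image _ (Set.toFinite _)

lemma inf_wset_le' {d : ℕ} (w : Fin d → ℝ) (l : ℕ) {c : ℝ}
    (h : ∃ S : Finset (Fin d), S.card = l ∧ ∑ i ∈ S, w i ≤ c) :
    sInf {y : ℝ | ∃ S : Finset (Fin d), S.card = l ∧ y = ∑ i ∈ S, w i} ≤ c := by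
  obtain ⟨S, hS, hle⟩ := h
  exact le_trans (csInf_le (wset_finite' w l).bddBelow ⟨S, hS, rfl⟩) hle

lemma inf_wset_eq' {d : ℕ} (w : Fin d → ℝ) (l : ℕ) {c : ℝ}
    (hmem : ∃ S : Finset (Fin d), S.card = l ∧ ∑ i ∈ S, w i = c)
    (hlb : ∀ S : Finset (Fin d), S.card = l → c ≤ ∑ i ∈ S, w i) :
    sInf {y : ℝ | ∃ S : Finset (Fin d), S.card = l ∧ y = ∑ i ∈ S, w i} = c := by
  obtain ⟨S, hS, hc⟩ := hmem
  refine le_antisymm (inf_wset_le' w l ⟨S, hS, hc.le⟩) ?_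
  refine le_csInf ⟨∑ i ∈ S, w i, S, hS, rfl⟩ ?_
  rintro y ⟨T, hT, rfl⟩
  exact hlb T hT

end AuxLemmas

theorem mms_strict_gap (d : ℕ) (hd : 2 ≤ d) (ε : ℝ) (hε0 : 0 < ε) (hε1 : ε < 1)
    (M : Finset α) (g0 : α) (hg0 : g0 ∈ M) (hcard : M.card = d)
    (v : α → ℝ) (hv : ∀ g ∈ M, v g = if g = g0 then ε else 1) :
    MMS v M 2 d = 1 + ε ∧ 2 * MMS v M 1 d = 2 * ε := by
  -- the singleton partition
  have e : M ≃ Fin d := M.equivFinOfCardEq hcard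
  set P0 : Fin d → Finset α := fun i => {(e.symm i : α)} with hP0def
  have hP0 : IsPartition M d P0 := by
    constructor
    · intro i j hij
      rw [hP0def]
      simp only [Finset.disjoint_singleton]
      intro hcoe
      exact hij (e.symm.injective (Subtype.ext hcoe))
    · ext x
      simp only [mem_biUnion, mem_univ, true_and, hP0def, mem_singleton]
      constructor
      · rintro ⟨i, rfl⟩; exact (e.symm i).2
      · intro hx; exact ⟨e ⟨x, hx⟩, by rw [Equiv.symm_apply_apply]⟩
  set i0 : Fin d := e ⟨g0, hg0⟩ with hi0def
  have hw : ∀ i, (∑ g ∈ P0 i, v g) = if i = i0 then ε else 1 := by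
    intro i
    rw [hP0def]
    simp only [sum_singleton]
    by_cases hi : i = i0
    · subst hi
      rw [hi0def, Equiv.symm_apply_apply, hv g0 hg0, if_pos rfl, if_pos rfl]
    · rw [if_neg hi, hv _ (e.symm i).2, if_neg]
      intro hcoe
      apply hi
      have : e.symm i = ⟨g0, hg0⟩ := Subtype.ext hcoe
      rw [hi0def, ← this, Equiv.apply_symm_apply]
  have hwge : ∀ i, ε ≤ ∑ g ∈ P0 i, v g := by
    intro i; rw [hw i]; split <;> linarith
  have : Nontrivial (Fin d) := Fin.nontrivial_iff_two_le.mpr hd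
  obtain ⟨j0, hj0⟩ := exists_ne i0
  constructor
  · -- MMS 2 = 1 + ε
    have hub : ∀ x ∈ { x | ∃ P : Fin d → Finset α, IsPartition M d P ∧
        x = sInf { y | ∃ S : Finset (Fin d), S.card = 2 ∧
          y = ∑ i ∈ S, ∑ g ∈ P i, v g } }, x ≤ 1 + ε := by
      rintro x ⟨P, hP, rfl⟩
      apply inf_wset_le'
      obtain ⟨i, j, hij, hle⟩ := claim2' hd hε0 hε1 hg0 hcard hv hP
      exact ⟨{i, j}, card_pair hij, by rwa [Finset.sum_pair hij]⟩
    have hmem : (1 + ε) ∈ { x | ∃ P : Fin d → Finset α, IsPartition M d P ∧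
        x = sInf { y | ∃ S : Finset (Fin d), S.card = 2 ∧
          y = ∑ i ∈ S, ∑ g ∈ P i, v g } } := by
      refine ⟨P0, hP0, ?_⟩
      refine (inf_wset_eq' _ 2 ?_ ?_).symm
      · refine ⟨{i0, j0}, card_pair (Ne.symm hj0), ?_⟩
        rw [Finset.sum_pair (Ne.symm hj0), hw i0, hw j0, if_pos rfl, if_neg hj0]
        ring
      · intro S hS
        obtain ⟨a, b, hab, rfl⟩ := card_eq_two.mp hS
        rw [Finset.sum_pair hab]
        by_cases ha : a = i0
        · have hb : b ≠ i0 := fun hb => hab (by rw [ha, hb])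
          rw [hw a, hw b, if_pos ha, if_neg hb]; linarith
        · rw [hw a, if_neg ha]
          have := hwge b
          linarith
    exact le_antisymm (csSup_le ⟨_, hmem⟩ hub) (le_csSup ⟨1 + ε, hub⟩ hmem)
  · -- MMS 1 = ε
    have hub : ∀ x ∈ { x | ∃ P : Fin d → Finset α, IsPartition M d P ∧
        x = sInf { y | ∃ S : Finset (Fin d), S.card = 1 ∧
          y = ∑ i ∈ S, ∑ g ∈ P i, v g } }, x ≤ ε := by
      rintro x ⟨P, hP, rfl⟩
      apply inf_wset_le'
      obtain ⟨i, hle⟩ := claim1' hd hε0 hg0 hcard hv hP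
      exact ⟨{i}, card_singleton i, by rwa [Finset.sum_singleton]⟩
    have hmem : ε ∈ { x | ∃ P : Fin d → Finset α, IsPartition M d P ∧
        x = sInf { y | ∃ S : Finset (Fin d), S.card = 1 ∧
          y = ∑ i ∈ S, ∑ g ∈ P i, v g } } := by
      refine ⟨P0, hP0, ?_⟩
      refine (inf_wset_eq' _ 1 ?_ ?_).symm
      · exact ⟨{i0}, card_singleton i0, by rw [Finset.sum_singleton, hw i0, if_pos rfl]⟩
      · intro S hS
        obtain ⟨a, rfl⟩ := card_eq_one.mp hS
        rw [Finset.sum_singleton]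
        exact hwge a
    have h1 : MMS v M 1 d = ε :=
      le_antisymm (csSup_le ⟨_, hmem⟩ hub) (le_csSup ⟨ε, hub⟩ hmem)
    rw [h1]
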